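/- Transience of the random walk: let μ be a probability measure on I with μ(ε) < 1. Then ρ = Σ_{y ∈ I} μ(y)·dim₁(y)/dim_q(y) satisfies 0 < ρ < 1, and Σ_{n=1}^∞ p_n(x, y) < ∞ for all x, y ∈ I. -/

import Mathlib

open Filter Topology MeasureTheory

/-- Words in the free monoid on two letters `α = true`, `β = false`. -/
abbrev Word := List Bool

/-- Conjugation: reverse the word and swap the two letters. -/
def wconj (x : Word) : Word := x.reverse.map (fun b => !b)

/-- Fusion multiplicity `m(z; x, y)`: the number of triples `(x₀, w, y₀)` with
`x = x₀w`, `y = w̄y₀` and `z = x₀y₀`. -/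
def fm (x y z : Word) : ℕ :=
  ((Finset.range (x.length + 1)).filter (fun k =>
    wconj (x.drop k) <+: y ∧ z = x.take k ++ y.drop (x.length - k))).card

/-- Maximal alternating blocks of a word. -/
def blocks : Word → List Word
  | [] => []
  | a :: rest =>
    match blocks rest with
    | [] => [[a]]
    | b :: bs => if b.head? = some a then [a] :: b :: bs else (a :: b) :: bs

/-- The quantum integer `[n]_q = (qⁿ - q⁻ⁿ)/(q - q⁻¹)`. -/
noncomputable def qnum (q : ℝ) (n : ℕ) : ℝ := (q ^ n - q⁻¹ ^ n) / (q - q⁻¹)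

/-- Quantum dimension `dim_q(x) = ∏ᵢ [|xᵢ|+1]_q` over the maximal alternating blocks. -/
noncomputable def dimq (q : ℝ) (x : Word) : ℝ :=
  ((blocks x).map (fun b => qnum q (b.length + 1))).prod

/-- Classical dimension `dim₁(x) = ∏ᵢ (|xᵢ|+1)` over the maximal alternating blocks. -/
def dim1 (x : Word) : ℕ := ((blocks x).map (fun b => b.length + 1)).prod
/-- The transition kernel of the random walk on `I` associated with a probability
measure `μ`: `p(x,y) = Σ_z μ(z)·m(z; x̄, y)·dim_q(y)/(dim_q(x)·dim_q(z))`. -/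
noncomputable def pker (q : ℝ) (μ : Word → ℝ) (x y : Word) : ℝ :=
  ∑ᶠ z : Word, μ z * (fm (wconj x) y z : ℝ) * dimq q y / (dimq q x * dimq q z)

/-- The `n`-step transition probabilities: `p₁ = p` and
`p_{n+1}(x,y) = Σ_u p_n(x,u)·p(u,y)`.  (The value at `n = 0` is irrelevant.) -/
noncomputable def pn (q : ℝ) (μ : Word → ℝ) : ℕ → Word → Word → ℝ
  | 0, _, _ => 0
  | 1, x, y => pker q μ x y
  | n + 2, x, y => ∑' u : Word, pn q μ (n + 1) x u * pker q μ u y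

/-- `ρ = Σ_y μ(y)·dim₁(y)/dim_q(y)`. -/
noncomputable def rho (q : ℝ) (μ : Word → ℝ) : ℝ := ∑' y : Word, μ y * (dim1 y : ℝ) / dimq q y

namespace RWT

/-! ### reverse/take/drop -/

theorem rev_drop {α : Type*} (l : List α) (k : ℕ) :
    l.reverse.drop k = (l.take (l.length - k)).reverse := by
  induction l generalizing k with
  | nil => simp
  | cons a l ih =>
    by_cases hk : k ≤ l.length
    · rw [List.reverse_cons, List.drop_append, ih]
      have h1 : l.length + 1 - k = (l.length - k) + 1 := by omega
      have h2 : k - l.reverse.length = 0 := by simp; omega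
      have h3 : k - l.length = 0 := by omega
      simp [h1, h2, h3]
    · have h1 : l.length + 1 - k = 0 := by omega
      rw [List.length_cons, h1]
      have : (a :: l).reverse.length ≤ k := by simp; omega
      simp only [List.drop_eq_nil_of_le this]
      simp

theorem rev_take {α : Type*} (l : List α) (k : ℕ) :
    l.reverse.take k = (l.drop (l.length - k)).reverse := by
  by_cases hk : k ≤ l.length
  · have := rev_drop l.reverse (l.length - k)
    rw [List.reverse_reverse] at this
    have h2 : l.reverse.length - (l.length - k) = k := by simp; omega
    rw [h2] at this
    rw [this, List.reverse_reverse]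
  · have h1 : l.length - k = 0 := by omega
    rw [h1, List.drop_zero, List.take_of_length_le (by simp; omega)]

/-! ### wconj lemmas -/

@[simp] theorem wconj_nil : wconj ([] : Word) = [] := rfl

@[simp] theorem wconj_length (x : Word) : (wconj x).length = x.length := by simp [wconj]

@[simp] theorem wconj_eq_nil {x : Word} : wconj x = [] ↔ x = [] := by simp [wconj]

@[simp] theorem wconj_wconj (x : Word) : wconj (wconj x) = x := by
  simp [wconj, List.map_reverse, List.map_map, Function.comp_def]

theorem wconj_append (u v : Word) : wconj (u ++ v) = wconj v ++ wconj u := by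
  simp [wconj, List.reverse_append]

theorem wconj_concat (u : Word) (c : Bool) : wconj (u ++ [c]) = (!c) :: wconj u := by
  rw [wconj_append]; rfl

theorem wconj_drop (x : Word) (k : ℕ) :
    (wconj x).drop k = wconj (x.take (x.length - k)) := by
  simp only [wconj, ← List.map_drop, ← List.map_take, rev_drop]

theorem wconj_take (x : Word) (k : ℕ) :
    (wconj x).take k = wconj (x.drop (x.length - k)) := by
  simp only [wconj, ← List.map_drop, ← List.map_take, rev_take]

end RWT

namespace RWT

/-! ### blocks -/

theorem blocks_cons (a : Bool) (r : Word) :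
    blocks (a :: r) = match blocks r with
      | [] => [[a]]
      | b :: bs => if b.head? = some a then [a] :: b :: bs else (a :: b) :: bs := rfl

theorem blocks_cons_nil (a : Bool) (r : Word) (h : blocks r = []) :
    blocks (a :: r) = [[a]] := by rw [blocks_cons, h]

theorem blocks_cons_cons (a : Bool) (r b : Word) (bs : List Word) (h : blocks r = b :: bs) :
    blocks (a :: r) = if b.head? = some a then [a] :: b :: bs else (a :: b) :: bs := by
  rw [blocks_cons, h]

theorem blocks_eq_nil {w : Word} (h : blocks w = []) : w = [] := by
  cases w with
  | nil => rfl
  | cons a r =>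
    exfalso
    rcases hbr : blocks r with _ | ⟨b, bs⟩
    · rw [blocks_cons_nil a r hbr] at h; simp at h
    · rw [blocks_cons_cons a r b bs hbr] at h; split at h <;> simp_all

theorem blocks_head {w b : Word} {bs : List Word} (h : blocks w = b :: bs) :
    b.head? = w.head? := by
  cases w with
  | nil => simp [blocks] at h
  | cons a r =>
    rcases hbr : blocks r with _ | ⟨b', bs'⟩
    · rw [blocks_cons_nil a r hbr] at h
      simp at h; simp [← h.1]
    · rw [blocks_cons_cons a r b' bs' hbr] at h
      split at h <;> (simp at h; simp [← h.1])

/-! ### the pair recursion dd -/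

noncomputable def dd : Word → ℝ × ℝ
  | [] => (1, 1)
  | c :: w =>
      if w.head? = some c then (2 * (dd w).1, (dd w).1)
      else ((dd w).1 + (dd w).2, (dd w).2)

theorem dd_cons (c : Bool) (w : Word) :
    dd (c :: w) = if w.head? = some c then (2 * (dd w).1, (dd w).1)
      else ((dd w).1 + (dd w).2, (dd w).2) := rfl

noncomputable def pblocks (L : List Word) : ℝ := (L.map (fun b => (b.length : ℝ) + 1)).prod

@[simp] theorem pblocks_nil : pblocks [] = 1 := by simp [pblocks]

theorem pblocks_cons (b : Word) (L : List Word) :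
    pblocks (b :: L) = ((b.length : ℝ) + 1) * pblocks L := by simp [pblocks]

theorem dd_spec (w : Word) : dd w = (pblocks (blocks w), pblocks (blocks w).tail) := by
  induction w with
  | nil => simp [dd, blocks]
  | cons c u ih =>
    rcases hbu : blocks u with _ | ⟨b, bs⟩
    · have hu : u = [] := blocks_eq_nil hbu
      subst hu
      simp [dd, blocks, pblocks]
    · have hb : b.head? = u.head? := blocks_head hbu
      have hbne : blocks (c :: u) = if b.head? = some c then [c] :: b :: bs
          else (c :: b) :: bs := by
        rw [blocks_cons, hbu]
      by_cases hc : u.head? = some c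
      · rw [dd_cons, if_pos hc, hbne, if_pos (hb.trans hc), ih, hbu]
        simp only [Prod.mk.injEq, pblocks_cons, List.tail_cons, List.length_cons,
          List.length_nil]
        push_cast
        exact ⟨by ring, trivial⟩
      · rw [dd_cons, if_neg hc, hbne, if_neg (by rw [hb]; exact hc), ih, hbu]
        simp only [Prod.mk.injEq, pblocks_cons, List.tail_cons, List.length_cons,
          List.length_nil]
        push_cast
        exact ⟨by ring, trivial⟩

theorem castprod (L : List Word) :
    (((L.map (fun b => b.length + 1)).prod : ℕ) : ℝ) = pblocks L := by
  induction L with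
  | nil => simp
  | cons b L ih => rw [List.map_cons, List.prod_cons, pblocks_cons, ← ih]; push_cast; ring

theorem dim1_cast (w : Word) : (dim1 w : ℝ) = (dd w).1 := by
  rw [dd_spec, dim1, castprod]

end RWT
namespace RWT

theorem dd_nil : dd ([] : Word) = (1, 1) := by simp [dd]

theorem dd_cons_pos {c : Bool} {w : Word} (h : w.head? = some c) :
    dd (c :: w) = (2 * (dd w).1, (dd w).1) := by rw [dd_cons, if_pos h]

theorem dd_cons_neg {c : Bool} {w : Word} (h : ¬ w.head? = some c) :
    dd (c :: w) = ((dd w).1 + (dd w).2, (dd w).2) := by rw [dd_cons, if_neg h]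

theorem dd_singleton (c : Bool) : dd [c] = (2, 1) := by
  rw [dd_cons_neg (by simp), dd_nil]
  norm_num

theorem dd_mul (b : Bool) (t : Word) :
    ∀ x : Word, x.getLast? = some b →
      dd (x ++ b :: t) = ((dd x).1 * (dd (b :: t)).1, (dd x).2 * (dd (b :: t)).1) := by
  intro x
  induction x with
  | nil => intro h; simp at h
  | cons c x' ih =>
    intro h
    cases x' with
    | nil =>
      simp only [List.getLast?_singleton, Option.some.injEq] at h
      subst h
      rw [List.cons_append, List.nil_append, dd_cons_pos (by simp), dd_singleton]
      refine Prod.ext ?_ ?_ <;> simp <;> ring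
    | cons c₂ x₃ =>
      have h2 : (c₂ :: x₃).getLast? = some b := by
        rw [List.getLast?_cons_cons] at h; exact h
      have ihh := ih h2
      rw [List.cons_append]
      by_cases hc : (c₂ :: x₃).head? = some c
      · rw [dd_cons_pos (by simpa using hc), dd_cons_pos hc, ihh]
        refine Prod.ext ?_ ?_ <;> simp <;> ring
      · rw [dd_cons_neg (by simpa using hc), dd_cons_neg hc, ihh]
        refine Prod.ext ?_ ?_ <;> simp <;> ring

theorem dd_star (a : Bool) (y : Word) :
    ∀ x : Word,
      (dd (x ++ [a])).1 * (dd ((!a) :: y)).1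
          = (dd x).1 * (dd y).1 + (dd (x ++ [a, !a] ++ y)).1 ∧
      (dd (x ++ [a])).2 * (dd ((!a) :: y)).1
          = (dd x).2 * (dd y).1 + (dd (x ++ [a, !a] ++ y)).2 := by
  have h3 : (dd ((!a) :: y)).1 = (dd y).1 + (dd ((!a) :: y)).2 := by
    by_cases hy : y.head? = some (!a)
    · rw [dd_cons_pos hy]; simp; ring
    · rw [dd_cons_neg hy]
  have ha1 : dd (a :: (!a) :: y)
      = ((dd ((!a) :: y)).1 + (dd ((!a) :: y)).2, (dd ((!a) :: y)).2) :=
    dd_cons_neg (by simp)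
  intro x
  induction x with
  | nil =>
    simp only [List.nil_append, List.cons_append]
    rw [dd_singleton, dd_nil, ha1]
    constructor <;> simp <;> linarith [h3]
  | cons c x' ih =>
    obtain ⟨ih1, ih2⟩ := ih
    cases x' with
    | nil =>
      simp only [List.nil_append, List.cons_append] at ih1 ih2 ⊢
      rw [dd_singleton, dd_nil, ha1] at ih1 ih2
      simp at ih1 ih2
      by_cases hca : a = c
      · subst hca
        rw [dd_cons_pos (w := [a]) rfl, dd_singleton,
          dd_cons_pos (w := a :: (!a) :: y) rfl, ha1]
        constructor <;> simp <;> linarith [ih1, ih2, h3]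
      · rw [dd_cons_neg (w := [a]) (by simpa using hca), dd_singleton,
          dd_cons_neg (w := a :: (!a) :: y) (by simpa using hca), ha1, dd_singleton]
        constructor <;> simp <;> linarith [ih1, ih2, h3]
    | cons c₂ x₃ =>
      simp only [List.cons_append, List.append_assoc, List.nil_append] at ih1 ih2 ⊢
      by_cases hc : c₂ = c
      · rw [dd_cons_pos (c := c) (w := c₂ :: (x₃ ++ [a])) (by simp [hc]),
          dd_cons_pos (c := c) (w := c₂ :: x₃) (by simp [hc]),
          dd_cons_pos (c := c) (w := c₂ :: (x₃ ++ a :: (!a) :: y)) (by simp [hc])]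
        constructor <;> simp <;> linarith [ih1, ih2]
      · rw [dd_cons_neg (c := c) (w := c₂ :: (x₃ ++ [a])) (by simp [hc]),
          dd_cons_neg (c := c) (w := c₂ :: x₃) (by simp [hc]),
          dd_cons_neg (c := c) (w := c₂ :: (x₃ ++ a :: (!a) :: y)) (by simp [hc])]
        constructor <;> simp <;> linarith [ih1, ih2]

end RWT
namespace RWT

theorem dim1_nil : dim1 ([] : Word) = 1 := rfl

theorem main_id : ∀ (y x : Word),
    ∑ k ∈ Finset.range (x.length + 1),
      (if wconj (x.drop k) <+: y then ((dim1 (x.take k ++ y.drop (x.length - k)) : ℕ) : ℝ) else 0)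
      = (dim1 x : ℝ) * (dim1 y : ℝ) := by
  intro y
  induction y with
  | nil =>
    intro x
    rw [Finset.sum_range_succ]
    have hlast : wconj (x.drop x.length) <+: ([] : Word) := by
      simp [List.drop_length]
    rw [if_pos hlast]
    have h0 : ∑ k ∈ Finset.range x.length,
        (if wconj (x.drop k) <+: ([] : Word) then
          ((dim1 (x.take k ++ ([] : Word).drop (x.length - k)) : ℕ) : ℝ) else 0) = 0 := by
      apply Finset.sum_eq_zero
      intro k hk
      rw [if_neg]
      intro hpre
      have h1 : wconj (x.drop k) = [] := List.prefix_nil.mp hpre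
      have h2 : x.drop k = [] := wconj_eq_nil.mp h1
      have := List.drop_eq_nil_iff.mp h2
      simp at hk
      omega
    rw [h0, List.take_length]
    simp [dim1_nil]
  | cons b y' ihy =>
    intro x
    rcases List.eq_nil_or_concat x with rfl | ⟨x'', c, rfl⟩
    · simp [dim1_nil]
    · simp only [List.concat_eq_append]
      have hlen : (x'' ++ [c]).length = x''.length + 1 := by simp
      rw [hlen, Finset.sum_range_succ]
      have hlast : wconj ((x'' ++ [c]).drop (x''.length + 1)) <+: b :: y' := by
        rw [← hlen, List.drop_length]
        exact List.nil_prefix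
      rw [if_pos hlast]
      have htake : (x'' ++ [c]).take (x''.length + 1) = x'' ++ [c] := by
        rw [← hlen, List.take_length]
      rw [htake]
      simp only [Nat.sub_self, List.drop_zero]
      -- now handle the sum over k < x''.length + 1
      by_cases hcb : c = b
      · subst hcb
        have h0 : ∑ k ∈ Finset.range (x''.length + 1),
            (if wconj ((x'' ++ [c]).drop k) <+: c :: y' then
              ((dim1 ((x'' ++ [c]).take k ++ (c :: y').drop (x''.length + 1 - k)) : ℕ) : ℝ)
              else 0) = 0 := by
          apply Finset.sum_eq_zero
          intro k hk
          rw [if_neg]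
          intro hpre
          have hk' : k ≤ x''.length := by simp at hk; omega
          have hdrop : (x'' ++ [c]).drop k = x''.drop k ++ [c] := by
            rw [List.drop_append, Nat.sub_eq_zero_of_le hk']
            rfl
          rw [hdrop, wconj_concat] at hpre
          rcases List.cons_prefix_cons.mp hpre with ⟨hhead, -⟩
          simp at hhead
        rw [h0, zero_add]
        -- dim1 multiplicativity, no merge
        have := dd_mul c y' (x'' ++ [c]) (by simp)
        simp only [dim1_cast]
        rw [this]
      · have hc2 : (!c) = b := by
          cases c <;> cases b <;> simp_all
        have hsum : ∑ k ∈ Finset.range (x''.length + 1),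
            (if wconj ((x'' ++ [c]).drop k) <+: b :: y' then
              ((dim1 ((x'' ++ [c]).take k ++ (b :: y').drop (x''.length + 1 - k)) : ℕ) : ℝ)
              else 0)
            = ∑ k ∈ Finset.range (x''.length + 1),
            (if wconj (x''.drop k) <+: y' then
              ((dim1 (x''.take k ++ y'.drop (x''.length - k)) : ℕ) : ℝ) else 0) := by
          apply Finset.sum_congr rfl
          intro k hk
          have hk' : k ≤ x''.length := by simp at hk; omega
          have hdrop : (x'' ++ [c]).drop k = x''.drop k ++ [c] := by
            rw [List.drop_append, Nat.sub_eq_zero_of_le hk']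
            rfl
          have htk : (x'' ++ [c]).take k = x''.take k := by
            rw [List.take_append, Nat.sub_eq_zero_of_le hk']
            simp
          have hdy : (b :: y').drop (x''.length + 1 - k) = y'.drop (x''.length - k) := by
            have : x''.length + 1 - k = (x''.length - k) + 1 := by omega
            rw [this, List.drop_succ_cons]
          have hcond : (wconj ((x'' ++ [c]).drop k) <+: b :: y')
              ↔ (wconj (x''.drop k) <+: y') := by
            rw [hdrop, wconj_concat, hc2, List.cons_prefix_cons]
            simp
          rw [htk, hdy]
          by_cases hp : wconj (x''.drop k) <+: y'
          · rw [if_pos (hcond.mpr hp), if_pos hp]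
          · rw [if_neg (fun hx => hp (hcond.mp hx)), if_neg hp]
        rw [hsum, ihy x'']
        -- star identity
        have hstar := dd_star c y' x''
        simp only [dim1_cast]
        have heq : (x'' ++ [c]) ++ (b :: y') = x'' ++ [c, !c] ++ y' := by
          rw [← hc2]; simp
        rw [heq, ← hc2]
        linarith [hstar.1]

end RWT
namespace RWT

theorem main_id' (X z : Word) :
    ∑ k ∈ Finset.range (X.length + 1),
      (if X.take k <+: z then ((dim1 (wconj (X.drop k) ++ z.drop k) : ℕ) : ℝ) else 0)
      = (dim1 (wconj X) : ℝ) * dim1 z := by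
  have h := main_id z (wconj X)
  rw [wconj_length] at h
  rw [← Finset.sum_range_reflect, ← h]
  apply Finset.sum_congr rfl
  intro k hk
  have hk' : k ≤ X.length := by simp at hk; omega
  have hkk : X.length + 1 - 1 - k = X.length - k := by omega
  have h1 : wconj ((wconj X).drop k) = X.take (X.length - k) := by
    rw [wconj_drop, wconj_wconj]
  have h2 : (wconj X).take k = wconj (X.drop (X.length - k)) := by
    rw [wconj_take]
  rw [hkk, h1, h2]


theorem sub_inv_neg {q : ℝ} (hq0 : 0 < q) (hq1 : q < 1) : q - q⁻¹ < 0 := by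
  have h1 : q * q⁻¹ = 1 := mul_inv_cancel₀ (ne_of_gt hq0)
  nlinarith

theorem sub_inv_ne {q : ℝ} (hq0 : 0 < q) (hq1 : q < 1) : q - q⁻¹ ≠ 0 :=
  ne_of_lt (sub_inv_neg hq0 hq1)

theorem two_le_add_inv {a : ℝ} (ha : 0 < a) : 2 ≤ a + a⁻¹ := by
  have h1 : a * a⁻¹ = 1 := mul_inv_cancel₀ (ne_of_gt ha)
  nlinarith [sq_nonneg (a - 1)]

theorem two_lt_add_inv {q : ℝ} (hq0 : 0 < q) (hq1 : q < 1) : 2 < q + q⁻¹ := by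
  have h1 : q * q⁻¹ = 1 := mul_inv_cancel₀ (ne_of_gt hq0)
  have h2 : 0 < (1 - q) * (1 - q) := mul_pos (by linarith) (by linarith)
  nlinarith

theorem qnum_zero {q : ℝ} : qnum q 0 = 0 := by simp [qnum]

theorem qnum_rec {q : ℝ} (hq0 : 0 < q) (hq1 : q < 1) (n : ℕ) :
    qnum q (n + 1) = (q + q⁻¹) / 2 * qnum q n + (q ^ n + q⁻¹ ^ n) / 2 := by
  have h1 := sub_inv_ne hq0 hq1
  have key : (q ^ (n+1) - q⁻¹ ^ (n+1))
      = (q + q⁻¹) / 2 * (q ^ n - q⁻¹ ^ n) + (q ^ n + q⁻¹ ^ n) / 2 * (q - q⁻¹) := by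
    ring
  rw [qnum, qnum, key, add_div, mul_div_cancel_right₀ _ h1, mul_div_assoc]

theorem qnum_ge {q : ℝ} (hq0 : 0 < q) (hq1 : q < 1) (n : ℕ) : (n : ℝ) ≤ qnum q n := by
  induction n with
  | zero => simp [qnum_zero]
  | succ n ih =>
    rw [qnum_rec hq0 hq1]
    have h1 : 2 ≤ q + q⁻¹ := two_le_add_inv hq0
    have h2 : 2 ≤ q ^ n + q⁻¹ ^ n := by
      have := two_le_add_inv (a := q ^ n) (by positivity)
      rwa [← inv_pow] at this
    have h3 : (0:ℝ) ≤ n := Nat.cast_nonneg n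
    push_cast
    nlinarith

theorem qnum_pos {q : ℝ} (hq0 : 0 < q) (hq1 : q < 1) (n : ℕ) (hn : 1 ≤ n) :
    0 < qnum q n := by
  have h1 : (1:ℝ) ≤ (n:ℝ) := by exact_mod_cast hn
  linarith [qnum_ge hq0 hq1 (q := q) n]

theorem qnum_gt {q : ℝ} (hq0 : 0 < q) (hq1 : q < 1) (n : ℕ) (hn : 2 ≤ n) :
    (n : ℝ) < qnum q n := by
  obtain ⟨m, rfl⟩ : ∃ m, n = m + 1 := ⟨n - 1, by omega⟩
  rw [qnum_rec hq0 hq1]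
  have h1 : 2 < q + q⁻¹ := two_lt_add_inv hq0 hq1
  have h2 : 2 ≤ q ^ m + q⁻¹ ^ m := by
    have := two_le_add_inv (a := q ^ m) (by positivity)
    rwa [← inv_pow] at this
  have h3 : (1:ℝ) ≤ (m:ℝ) := by
    have : 1 ≤ m := by omega
    exact_mod_cast this
  have h4 := qnum_ge hq0 hq1 (q := q) m
  push_cast
  nlinarith

end RWT
namespace RWT

theorem prod_facts {q : ℝ} (hq0 : 0 < q) (hq1 : q < 1) (L : List ℕ) :
    0 < (L.map (fun l : ℕ => (l:ℝ) + 1)).prod ∧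
      (L.map (fun l : ℕ => (l:ℝ) + 1)).prod ≤ (L.map (fun l : ℕ => qnum q (l+1))).prod := by
  induction L with
  | nil =>
    simp only [List.map_nil, List.prod_nil]
    norm_num
  | cons l L ih =>
    obtain ⟨h1, h2⟩ := ih
    have hq : ((l:ℝ) + 1) ≤ qnum q (l+1) := by
      have := qnum_ge hq0 hq1 (q := q) (l+1)
      push_cast at this
      linarith
    have hl : (0:ℝ) < (l:ℝ) + 1 := by positivity
    refine ⟨?_, ?_⟩ <;> simp only [List.map_cons, List.prod_cons]
    · exact mul_pos hl h1
    · exact mul_le_mul hq h2 (le_of_lt h1) (by linarith)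

theorem dimq_eq (q : ℝ) (x : Word) :
    dimq q x = (((blocks x).map List.length).map (fun l : ℕ => qnum q (l+1))).prod := by
  rw [dimq, List.map_map]
  rfl

theorem dim1_eq (x : Word) :
    (dim1 x : ℝ) = (((blocks x).map List.length).map (fun l : ℕ => (l:ℝ) + 1)).prod := by
  rw [dim1, castprod, pblocks, List.map_map]
  rfl

theorem dimq_pos {q : ℝ} (hq0 : 0 < q) (hq1 : q < 1) (x : Word) : 0 < dimq q x := by
  have h := prod_facts hq0 hq1 ((blocks x).map List.length)
  rw [dimq_eq]
  exact lt_of_lt_of_le h.1 h.2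

theorem dimq_ne {q : ℝ} (hq0 : 0 < q) (hq1 : q < 1) (x : Word) : dimq q x ≠ 0 :=
  ne_of_gt (dimq_pos hq0 hq1 x)

theorem dim1_le_dimq {q : ℝ} (hq0 : 0 < q) (hq1 : q < 1) (x : Word) :
    (dim1 x : ℝ) ≤ dimq q x := by
  rw [dim1_eq, dimq_eq]
  exact (prod_facts hq0 hq1 _).2

theorem dim1_pos (x : Word) : 0 < dim1 x := by
  rw [dim1]
  apply List.prod_pos
  intro a ha
  simp only [List.mem_map] at ha
  obtain ⟨b, -, rfl⟩ := ha
  omega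

theorem dim1_pos' (x : Word) : (0:ℝ) < (dim1 x : ℝ) := by
  exact_mod_cast dim1_pos x

theorem dim1_lt_dimq {q : ℝ} (hq0 : 0 < q) (hq1 : q < 1) {x : Word} (hx : x ≠ []) :
    (dim1 x : ℝ) < dimq q x := by
  rcases hbx : blocks x with _ | ⟨b, bs⟩
  · exact absurd (blocks_eq_nil hbx) hx
  · have hbh : b.head? = x.head? := blocks_head hbx
    have hbne : b ≠ [] := by
      intro h
      subst h
      rcases x with _ | ⟨c, x'⟩
      · exact hx rfl
      · simp at hbh
    have hb1 : 1 ≤ b.length := by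
      rcases b with _ | _
      · exact absurd rfl hbne
      · simp
    have hgt : ((b.length : ℝ) + 1) < qnum q (b.length + 1) := by
      have := qnum_gt hq0 hq1 (b.length + 1) (by omega)
      push_cast at this
      linarith
    have hrest := prod_facts hq0 hq1 (bs.map List.length)
    have hq0' : 0 < qnum q (b.length + 1) := qnum_pos hq0 hq1 _ (by omega)
    rw [dim1_eq, dimq_eq, hbx]
    simp only [List.map_cons, List.prod_cons]
    calc ((b.length:ℝ) + 1) * ((bs.map List.length).map (fun l : ℕ => (l:ℝ) + 1)).prod
        < qnum q (b.length + 1) * ((bs.map List.length).map (fun l : ℕ => (l:ℝ) + 1)).prod := by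
          exact mul_lt_mul_of_pos_right hgt hrest.1
      _ ≤ qnum q (b.length + 1) * ((bs.map List.length).map (fun l : ℕ => qnum q (l+1))).prod := by
          exact mul_le_mul_of_nonneg_left hrest.2 (le_of_lt hq0')

end RWT
namespace RWT

theorem pker_eq {q : ℝ} (μ : Word → ℝ) (x y : Word) :
    pker q μ x y = ∑ k ∈ Finset.range (x.length + 1),
      (if wconj ((wconj x).drop k) <+: y then
        μ ((wconj x).take k ++ y.drop (x.length - k)) * dimq q y /
          (dimq q x * dimq q ((wconj x).take k ++ y.drop (x.length - k)))
      else 0) := by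
  classical
  have hXlen : (wconj x).length = x.length := wconj_length x
  set X := wconj x with hX
  set n := x.length with hn
  set zk : ℕ → Word := fun k => X.take k ++ y.drop (n - k) with hzk
  set K : Finset ℕ := (Finset.range (n + 1)).filter (fun k => wconj (X.drop k) <+: y) with hK
  set T : Finset Word := K.image zk with hT
  set F : Word → ℝ := fun z => μ z * dimq q y / (dimq q x * dimq q z) with hF
  set g : Word → ℝ := fun z => μ z * (fm X y z : ℝ) * dimq q y / (dimq q x * dimq q z) with hg
  have hfm : ∀ z, (fm X y z : ℝ) = ∑ k ∈ K, (if z = zk k then (1:ℝ) else 0) := by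
    intro z
    rw [fm, hXlen, ← Finset.filter_filter, Finset.card_filter]
    rw [Nat.cast_sum]
    apply Finset.sum_congr rfl
    intro k hk
    split <;> simp
  have hsupp : ∀ z, z ∉ T → g z = 0 := by
    intro z hz
    have hz0 : (fm X y z : ℝ) = 0 := by
      rw [hfm z]
      apply Finset.sum_eq_zero
      intro k hk
      rw [if_neg]
      intro he
      exact hz (Finset.mem_image.mpr ⟨k, hk, he.symm⟩)
    rw [hg]
    simp only
    rw [hz0]
    ring
  have h1 : pker q μ x y = ∑ z ∈ T, g z := by
    rw [pker]
    exact finsum_eq_finset_sum_of_support_subset _ (fun z hz => by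
      by_contra hzT
      exact hz (hsupp z hzT))
  have h2 : ∀ z ∈ T, g z = ∑ k ∈ K, (if z = zk k then F z else 0) := by
    intro z _
    rw [hg]
    simp only
    rw [hfm z, Finset.mul_sum, Finset.sum_mul, Finset.sum_div]
    apply Finset.sum_congr rfl
    intro k hk
    split
    · rw [hF]; ring
    · simp
  rw [h1, Finset.sum_congr rfl h2, Finset.sum_comm]
  have h3 : ∀ k ∈ K, ∑ z ∈ T, (if z = zk k then F z else 0) = F (zk k) := by
    intro k hk
    rw [Finset.sum_ite_eq' T (zk k) F]
    rw [if_pos (Finset.mem_image.mpr ⟨k, hk, rfl⟩)]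
  rw [Finset.sum_congr rfl h3, hK, Finset.sum_filter]

end RWT
namespace RWT

theorem take_length_le (X : Word) {k : ℕ} (hk : k ≤ X.length) : (X.take k).length = k := by
  simp [List.length_take]; omega

theorem key_bound {q : ℝ} (hq0 : 0 < q) (hq1 : q < 1) (x t : Word) {k : ℕ}
    (hk : k ≤ x.length) :
    (dim1 (wconj ((wconj x).drop k) ++ t) : ℝ)
      ≤ (dim1 x : ℝ) * (dim1 ((wconj x).take k ++ t) : ℝ) := by
  have hXlen : (wconj x).length = x.length := wconj_length x
  have hlen : ((wconj x).take k).length = k := take_length_le _ (by omega)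
  have hdrop : ((wconj x).take k ++ t).drop k = t := by
    have h2 := List.drop_left (l₁ := (wconj x).take k) (l₂ := t)
    rwa [hlen] at h2
  have h := main_id' (wconj x) ((wconj x).take k ++ t)
  have hmem : k ∈ Finset.range ((wconj x).length + 1) := by simp; omega
  have hterm := Finset.single_le_sum
    (f := fun j => if (wconj x).take j <+: ((wconj x).take k ++ t) then
      ((dim1 (wconj ((wconj x).drop j) ++ ((wconj x).take k ++ t).drop j) : ℕ) : ℝ) else 0)
    (fun j _ => by split <;> simp) hmem
  rw [h] at hterm
  rw [if_pos (List.prefix_append _ _), hdrop, wconj_wconj] at hterm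
  exact hterm

theorem hasSum_pker {q : ℝ} (hq0 : 0 < q) (hq1 : q < 1) {μ : Word → ℝ}
    (hμ0 : ∀ z, 0 ≤ μ z) (hμs : Summable μ) (x : Word) :
    HasSum (fun y => pker q μ x y * ((dim1 y : ℝ) / dimq q y))
      ((dim1 x : ℝ) / dimq q x * rho q μ) := by
  classical
  have hXlen : (wconj x).length = x.length := wconj_length x
  have hDx := dimq_pos hq0 hq1 x
  -- the fiber function
  set f : ℕ → Word → ℝ := fun k t =>
    μ ((wconj x).take k ++ t) * (dim1 (wconj ((wconj x).drop k) ++ t) : ℝ) /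
      (dimq q x * dimq q ((wconj x).take k ++ t)) with hf
  set g : ℕ → Word → ℝ := fun k yy =>
    if wconj ((wconj x).drop k) <+: yy then
      μ ((wconj x).take k ++ yy.drop (x.length - k)) * (dim1 yy : ℝ) /
        (dimq q x * dimq q ((wconj x).take k ++ yy.drop (x.length - k)))
    else 0 with hg
  set G : ℕ → Word → ℝ := fun k z =>
    if (wconj x).take k <+: z then
      μ z * (dim1 (wconj ((wconj x).drop k) ++ z.drop k) : ℝ) / (dimq q x * dimq q z)
    else 0 with hG
  have hf_nonneg : ∀ k t, 0 ≤ f k t := by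
    intro k t
    apply div_nonneg
    · exact mul_nonneg (hμ0 _) (Nat.cast_nonneg _)
    · exact le_of_lt (mul_pos hDx (dimq_pos hq0 hq1 _))
  have hf_le : ∀ k, k ≤ x.length → ∀ t,
      f k t ≤ ((dim1 x : ℝ) / dimq q x) * μ ((wconj x).take k ++ t) := by
    intro k hk t
    have hb := key_bound hq0 hq1 x t hk
    have hd1 : (dim1 ((wconj x).take k ++ t) : ℝ) ≤ dimq q ((wconj x).take k ++ t) :=
      dim1_le_dimq hq0 hq1 _
    have hDz := dimq_pos hq0 hq1 ((wconj x).take k ++ t)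
    rw [hf]
    simp only
    rw [div_le_iff₀ (mul_pos hDx hDz)]
    have h2 : (dim1 x : ℝ) / dimq q x * μ ((wconj x).take k ++ t) * (dimq q x * dimq q ((wconj x).take k ++ t))
        = μ ((wconj x).take k ++ t) * ((dim1 x : ℝ) * dimq q ((wconj x).take k ++ t)) := by
      field_simp
    rw [h2]
    apply mul_le_mul_of_nonneg_left _ (hμ0 _)
    calc (dim1 (wconj ((wconj x).drop k) ++ t) : ℝ)
        ≤ (dim1 x : ℝ) * (dim1 ((wconj x).take k ++ t) : ℝ) := hb
      _ ≤ (dim1 x : ℝ) * dimq q ((wconj x).take k ++ t) := by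
          apply mul_le_mul_of_nonneg_left hd1 (Nat.cast_nonneg _)
  have hf_summable : ∀ k, k ≤ x.length → Summable (f k) := by
    intro k hk
    apply Summable.of_nonneg_of_le (hf_nonneg k) (hf_le k hk)
    apply Summable.mul_left
    apply hμs.comp_injective
    intro s t hst
    exact List.append_cancel_left hst
  -- g k sums to ∑' f k
  have hg_hasSum : ∀ k, k ≤ x.length → HasSum (g k) (∑' t, f k t) := by
    intro k hk
    have hlenQ : (wconj ((wconj x).drop k)).length = x.length - k := by
      simp [wconj_length]
    have hinj : Function.Injective (fun t : Word => wconj ((wconj x).drop k) ++ t) := by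
      intro s t hst
      exact List.append_cancel_left hst
    have hcomp : (g k) ∘ (fun t : Word => wconj ((wconj x).drop k) ++ t) = f k := by
      funext t
      rw [hg, hf]
      simp only [Function.comp_apply]
      rw [if_pos (List.prefix_append _ _)]
      rw [show (wconj ((wconj x).drop k) ++ t).drop (x.length - k) = t by
        rw [← hlenQ, List.drop_left]]
    have hzero : ∀ yy ∉ Set.range (fun t : Word => wconj ((wconj x).drop k) ++ t),
        g k yy = 0 := by
      intro yy hyy
      rw [hg]
      simp only
      rw [if_neg]
      intro ⟨t, ht⟩
      exact hyy ⟨t, ht⟩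
    rw [← Function.Injective.hasSum_iff hinj hzero, hcomp]
    exact (hf_summable k hk).hasSum
  -- G k sums to ∑' f k
  have hG_hasSum : ∀ k, k ≤ x.length → HasSum (G k) (∑' t, f k t) := by
    intro k hk
    have hlenT : ((wconj x).take k).length = k := take_length_le _ (by omega)
    have hinj : Function.Injective (fun t : Word => (wconj x).take k ++ t) := by
      intro s t hst
      exact List.append_cancel_left hst
    have hcomp : (G k) ∘ (fun t : Word => (wconj x).take k ++ t) = f k := by
      funext t
      rw [hG, hf]
      simp only [Function.comp_apply]
      rw [if_pos (List.prefix_append _ _)]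
      rw [show ((wconj x).take k ++ t).drop k = t by
        have h2 := List.drop_left (l₁ := (wconj x).take k) (l₂ := t)
        rwa [hlenT] at h2]
    have hzero : ∀ z ∉ Set.range (fun t : Word => (wconj x).take k ++ t), G k z = 0 := by
      intro z hz
      rw [hG]
      simp only
      rw [if_neg]
      intro ⟨t, ht⟩
      exact hz ⟨t, ht⟩
    rw [← Function.Injective.hasSum_iff hinj hzero, hcomp]
    exact (hf_summable k hk).hasSum
  -- sum over k
  have htotal : HasSum (fun yy => ∑ k ∈ Finset.range (x.length + 1), g k yy)
      (∑ k ∈ Finset.range (x.length + 1), ∑' t, f k t) := by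
    apply hasSum_sum
    intro k hk
    exact hg_hasSum k (by simp at hk; omega)
  -- pointwise identification with pker * h
  have hpoint : ∀ yy, pker q μ x yy * ((dim1 yy : ℝ) / dimq q yy)
      = ∑ k ∈ Finset.range (x.length + 1), g k yy := by
    intro yy
    rw [pker_eq μ x yy, Finset.sum_mul]
    apply Finset.sum_congr rfl
    intro k hk
    rw [hg]
    simp only
    split
    · have hDy := dimq_ne hq0 hq1 yy
      have hDz := dimq_ne hq0 hq1 ((wconj x).take k ++ yy.drop (x.length - k))
      have hDx' := dimq_ne hq0 hq1 x
      field_simp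
    · exact zero_mul _
  -- identification of the total sum
  have hsumval : ∑ k ∈ Finset.range (x.length + 1), ∑' t, f k t
      = (dim1 x : ℝ) / dimq q x * rho q μ := by
    have hGsummable : ∀ k ∈ Finset.range (x.length + 1), Summable (G k) := by
      intro k hk
      exact (hG_hasSum k (by simp at hk; omega)).summable
    have h1 : ∀ k ∈ Finset.range (x.length + 1), ∑' t, f k t = ∑' z, G k z := by
      intro k hk
      exact ((hG_hasSum k (by simp at hk; omega)).tsum_eq).symm
    rw [Finset.sum_congr rfl h1, ← Summable.tsum_finsetSum hGsummable]
    have h2 : ∀ z, ∑ k ∈ Finset.range (x.length + 1), G k z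
        = ((dim1 x : ℝ) / dimq q x) * (μ z * (dim1 z : ℝ) / dimq q z) := by
      intro z
      have h3 : ∀ k, G k z = (μ z / (dimq q x * dimq q z)) *
          (if (wconj x).take k <+: z then
            ((dim1 (wconj ((wconj x).drop k) ++ z.drop k) : ℕ) : ℝ) else 0) := by
        intro k
        rw [hG]
        simp only
        split
        · ring
        · ring
      simp only [h3]
      rw [← Finset.mul_sum]
      have h4 := main_id' (wconj x) z
      rw [hXlen] at h4
      rw [h4, wconj_wconj]
      have hDz := dimq_ne hq0 hq1 z
      have hDx' := dimq_ne hq0 hq1 x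
      field_simp
    rw [tsum_congr h2, tsum_mul_left, rho]
  rw [hsumval] at htotal
  have hfe : (fun yy => pker q μ x yy * ((dim1 yy : ℝ) / dimq q yy))
      = fun yy => ∑ k ∈ Finset.range (x.length + 1), g k yy := funext hpoint
  rw [hfe]
  exact htotal

end RWT
namespace RWT

theorem pker_nonneg {q : ℝ} (hq0 : 0 < q) (hq1 : q < 1) {μ : Word → ℝ}
    (hμ0 : ∀ z, 0 ≤ μ z) (x y : Word) : 0 ≤ pker q μ x y := by
  rw [pker_eq]
  apply Finset.sum_nonneg
  intro k hk
  split
  · apply div_nonneg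
    · exact mul_nonneg (hμ0 _) (le_of_lt (dimq_pos hq0 hq1 _))
    · exact le_of_lt (mul_pos (dimq_pos hq0 hq1 _) (dimq_pos hq0 hq1 _))
  · exact le_rfl

theorem pn_one (q : ℝ) (μ : Word → ℝ) (x y : Word) : pn q μ 1 x y = pker q μ x y := rfl

theorem pn_succ (q : ℝ) (μ : Word → ℝ) (n : ℕ) (x y : Word) :
    pn q μ (n + 2) x y = ∑' u : Word, pn q μ (n + 1) x u * pker q μ u y := rfl

theorem hpos {q : ℝ} (hq0 : 0 < q) (hq1 : q < 1) (y : Word) :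
    0 < (dim1 y : ℝ) / dimq q y :=
  div_pos (dim1_pos' y) (dimq_pos hq0 hq1 y)

theorem pn_main {q : ℝ} (hq0 : 0 < q) (hq1 : q < 1) {μ : Word → ℝ}
    (hμ0 : ∀ z, 0 ≤ μ z) (hμs : Summable μ) : ∀ n : ℕ, ∀ x : Word,
    (∀ y, 0 ≤ pn q μ (n + 1) x y) ∧
    HasSum (fun y => pn q μ (n + 1) x y * ((dim1 y : ℝ) / dimq q y))
      (((dim1 x : ℝ) / dimq q x) * (rho q μ) ^ (n + 1)) := by
  intro n
  induction n with
  | zero =>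
    intro x
    constructor
    · intro y
      rw [pn_one]
      exact pker_nonneg hq0 hq1 hμ0 x y
    · have := hasSum_pker hq0 hq1 hμ0 hμs x
      rw [pow_one]
      simpa [pn_one] using this
  | succ n ih =>
    intro x
    have ihx := ih x
    obtain ⟨ihnn, ihsum⟩ := ihx
    set P : Word → ℝ := fun u => pn q μ (n + 1) x u with hP
    set hh : Word → ℝ := fun y => (dim1 y : ℝ) / dimq q y with hhh
    set ρ : ℝ := rho q μ with hρ
    set F : Word × Word → ℝ := fun p => P p.1 * (pker q μ p.1 p.2 * hh p.2) with hF
    have hFnn : ∀ p, 0 ≤ F p := by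
      intro p
      exact mul_nonneg (ihnn p.1)
        (mul_nonneg (pker_nonneg hq0 hq1 hμ0 _ _) (le_of_lt (hpos hq0 hq1 _)))
    have hF1 : ∀ u, HasSum (fun y => F (u, y)) (P u * (hh u * ρ)) := by
      intro u
      exact (hasSum_pker hq0 hq1 hμ0 hμs u).mul_left (P u)
    have hrowsum : HasSum (fun u => P u * (hh u * ρ)) (hh x * ρ ^ (n + 1) * ρ) := by
      have := ihsum.mul_right ρ
      have he : (fun u => P u * hh u * ρ) = fun u => P u * (hh u * ρ) := by
        funext u; ring
      rw [he] at this
      exact this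
    have hFsum : Summable F :=
      (summable_prod_of_nonneg hFnn).2
        ⟨fun u => (hF1 u).summable,
          Summable.congr hrowsum.summable (fun u => ((hF1 u).tsum_eq).symm)⟩
    have hFval : ∑' p, F p = hh x * ρ ^ (n + 2) := by
      rw [Summable.tsum_prod' hFsum (fun u => (hF1 u).summable)]
      have h1 : ∀ u, ∑' y, F (u, y) = P u * (hh u * ρ) := fun u => (hF1 u).tsum_eq
      rw [tsum_congr h1, hrowsum.tsum_eq]
      ring
    set G : Word × Word → ℝ := fun p => F (p.2, p.1) with hGdef
    have hGsum : Summable G := hFsum.prod_symm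
    have hGval : ∑' p : Word × Word, G p = ∑' p, F p :=
      (Equiv.prodComm Word Word).tsum_eq F
    have hslice : ∀ y : Word, Summable (fun u => F (u, y)) := by
      intro y
      exact hFsum.comp_injective (fun u v huv => congrArg Prod.fst huv)
    have hGnn : ∀ p : Word × Word, 0 ≤ G p := fun p => hFnn (p.2, p.1)
    have hmarg : Summable (fun y => ∑' u, F (u, y)) :=
      ((summable_prod_of_nonneg hGnn).1 hGsum).2
    have hmargval : ∑' y, ∑' u, F (u, y) = hh x * ρ ^ (n + 2) := by
      rw [← hFval, ← hGval, Summable.tsum_prod' hGsum (fun y => hslice y)]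
    constructor
    · intro y
      rw [pn_succ]
      apply tsum_nonneg
      intro u
      exact mul_nonneg (ihnn u) (pker_nonneg hq0 hq1 hμ0 u y)
    · have hfe : (fun y => pn q μ (n + 2) x y * hh y) = fun y => ∑' u, F (u, y) := by
        funext y
        rw [pn_succ, ← tsum_mul_right]
        apply tsum_congr
        intro u
        rw [hF]
        ring
      rw [show n + 1 + 1 = n + 2 from rfl, hfe]
      have := hmarg.hasSum
      rwa [hmargval] at this

end RWT

/-- Transience of the random walk: if `μ` is a probability measure on `I`
with `μ(ε) < 1`, then `0 < ρ < 1` and `Σ_{n=1}^∞ p_n(x,y) < ∞` for all `x, y`. -/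
theorem random_walk_transient (q : ℝ) (hq0 : 0 < q) (hq1 : q < 1)
    (μ : Word → ℝ) (hμ0 : ∀ z, 0 ≤ μ z) (hμ1 : HasSum μ 1) (hε : μ [] < 1) :
    0 < rho q μ ∧ rho q μ < 1 ∧
    ∀ x y : Word, Summable (fun n : ℕ => pn q μ (n + 1) x y) := by
  have hμs : Summable μ := hμ1.summable
  have hm_nonneg : ∀ y, 0 ≤ μ y * (dim1 y : ℝ) / dimq q y := fun y =>
    div_nonneg (mul_nonneg (hμ0 y) (Nat.cast_nonneg _)) (le_of_lt (RWT.dimq_pos hq0 hq1 y))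
  have hm_le : ∀ y, μ y * (dim1 y : ℝ) / dimq q y ≤ μ y := by
    intro y
    rw [mul_div_assoc]
    have h1 : (dim1 y : ℝ) / dimq q y ≤ 1 :=
      (div_le_one (RWT.dimq_pos hq0 hq1 y)).mpr (RWT.dim1_le_dimq hq0 hq1 y)
    calc μ y * ((dim1 y:ℝ) / dimq q y) ≤ μ y * 1 := mul_le_mul_of_nonneg_left h1 (hμ0 y)
      _ = μ y := mul_one _
  have hm_summable : Summable (fun y => μ y * (dim1 y : ℝ) / dimq q y) :=
    Summable.of_nonneg_of_le hm_nonneg hm_le hμs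
  have hex : ∃ y, 0 < μ y := by
    by_contra h
    push_neg at h
    have hz : ∀ y, μ y = 0 := fun y => le_antisymm (h y) (hμ0 y)
    have h0 : HasSum μ 0 := by
      have he : μ = fun _ => (0:ℝ) := funext hz
      rw [he]
      exact hasSum_zero
    exact one_ne_zero (hμ1.unique h0)
  obtain ⟨y₀, hy₀⟩ := hex
  have hρ0 : 0 < rho q μ := by
    have h1 : 0 < μ y₀ * (dim1 y₀ : ℝ) / dimq q y₀ :=
      div_pos (mul_pos hy₀ (RWT.dim1_pos' y₀)) (RWT.dimq_pos hq0 hq1 y₀)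
    exact lt_of_lt_of_le h1 (Summable.le_tsum hm_summable y₀ (fun j _ => hm_nonneg j))
  have hex1 : ∃ y, y ≠ ([] : Word) ∧ 0 < μ y := by
    by_contra h
    push_neg at h
    have hz : ∀ y ≠ ([] : Word), μ y = 0 := fun y hy => le_antisymm (h y hy) (hμ0 y)
    have h1 : HasSum μ (μ []) := hasSum_single ([] : Word) hz
    have := hμ1.unique h1
    linarith
  obtain ⟨y₁, hy₁ne, hy₁⟩ := hex1
  have hρ1 : rho q μ < 1 := by
    have hstrict : μ y₁ * (dim1 y₁ : ℝ) / dimq q y₁ < μ y₁ := by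
      rw [mul_div_assoc]
      have h1 : (dim1 y₁ : ℝ) / dimq q y₁ < 1 :=
        (div_lt_one (RWT.dimq_pos hq0 hq1 y₁)).mpr (RWT.dim1_lt_dimq hq0 hq1 hy₁ne)
      calc μ y₁ * ((dim1 y₁:ℝ)/dimq q y₁) < μ y₁ * 1 := mul_lt_mul_of_pos_left h1 hy₁
        _ = μ y₁ := mul_one _
    have h2 := Summable.tsum_lt_tsum hm_le hstrict hm_summable hμs
    rw [hμ1.tsum_eq] at h2
    exact h2
  refine ⟨hρ0, hρ1, ?_⟩
  intro x y
  have hhy := RWT.hpos hq0 hq1 y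
  have hbound : ∀ n : ℕ, pn q μ (n+1) x y
      ≤ (((dim1 x : ℝ)/dimq q x) / ((dim1 y : ℝ)/dimq q y)) * ((rho q μ)^n * rho q μ) := by
    intro n
    obtain ⟨hnn, hsum⟩ := RWT.pn_main hq0 hq1 hμ0 hμs n x
    have hterm : pn q μ (n+1) x y * ((dim1 y:ℝ)/dimq q y)
        ≤ ((dim1 x:ℝ)/dimq q x) * (rho q μ)^(n+1) :=
      le_hasSum hsum y (fun j _ => mul_nonneg (hnn j) (le_of_lt (RWT.hpos hq0 hq1 j)))
    rw [← le_div_iff₀ hhy] at hterm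
    calc pn q μ (n+1) x y
        ≤ ((dim1 x:ℝ)/dimq q x) * (rho q μ)^(n+1) / ((dim1 y:ℝ)/dimq q y) := hterm
      _ = (((dim1 x : ℝ)/dimq q x) / ((dim1 y : ℝ)/dimq q y)) * ((rho q μ)^n * rho q μ) := by
          rw [pow_succ]
          have hyne : (dim1 y : ℝ)/dimq q y ≠ 0 := ne_of_gt hhy
          field_simp
  have hgeom : Summable (fun n : ℕ =>
      (((dim1 x : ℝ)/dimq q x) / ((dim1 y : ℝ)/dimq q y)) * ((rho q μ)^n * rho q μ)) := by
    apply Summable.mul_left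
    apply Summable.mul_right
    exact summable_geometric_of_lt_one (le_of_lt hρ0) hρ1
  apply Summable.of_nonneg_of_le _ hbound hgeom
  intro n
  exact (RWT.pn_main hq0 hq1 hμ0 hμs n x).1 y
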